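/- Let r ≥ 3 and n ≥ 1, and let F be a family of subsets of [n] = {1,…,n} containing no near-sunflower of size r. Then |F| ≤ (r−1)·2^⌈(r−2)n/(r−1)⌉. -/

import Mathlib

/-- A family `H` of `r` distinct subsets of `[n]` is a *near-sunflower of size `r`*
if every `i ∈ [n]` belongs to either `0`, `1`, `r-1` or `r` of the sets in `H`. -/
def IsNearSunflower (n r : ℕ) (H : Finset (Finset (Fin n))) : Prop :=
  H.card = r ∧
  ∀ i : Fin n, (H.filter (fun A => i ∈ A)).card ∈ ({0, 1, r - 1, r} : Set ℕ)

/-- If `F` is a family of subsets of `[n]` containing no near-sunflower of size `r`,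
then `|F| ≤ (r-1)·2^⌈(r-2)n/(r-1)⌉`. -/
theorem near_sunflower_upper_bound (r n : ℕ) (hr : 3 ≤ r) (hn : 1 ≤ n)
    (F : Finset (Finset (Fin n)))
    (hF : ∀ H ⊆ F, ¬ IsNearSunflower n r H) :
    F.card ≤ (r - 1) * 2 ^ ⌈(((r : ℚ) - 2) * n) / ((r : ℚ) - 1)⌉₊ := by
  classical
  by_contra hcon
  push_neg at hcon
  set k := r - 1 with hkdef
  have hk2 : 2 ≤ k := by omega
  have hk0 : 0 < k := by omega
  have hrk : r = k + 1 := by omega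
  set N := n - n / k with hNdef
  have hdivlt : n / k < n := Nat.div_lt_self (by omega) (by omega)
  -- N ≤ the ceiling exponent
  have hNle : N ≤ ⌈(((r : ℚ) - 2) * n) / ((r : ℚ) - 1)⌉₊ := by
    have hNpos : 1 ≤ N := by omega
    have h1 : N - 1 < ⌈(((r : ℚ) - 2) * n) / ((r : ℚ) - 1)⌉₊ := by
      rw [Nat.lt_ceil]
      have hdm : k * (n / k) + n % k = n := Nat.div_add_mod n k
      have hml : n % k < k := Nat.mod_lt n hk0
      have hmod : n < k * (n / k) + k := by omega
      have hrq : (r : ℚ) = (k : ℚ) + 1 := by rw [hrk]; push_cast; ring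
      have hkQ : (0 : ℚ) < (k : ℚ) := by exact_mod_cast hk0
      rw [hrq, lt_div_iff₀ (by linarith)]
      have hc1 : ((N - 1 : ℕ) : ℚ) = (n : ℚ) - ((n / k : ℕ) : ℚ) - 1 := by
        rw [show N - 1 = n - n / k - 1 from rfl,
          Nat.cast_sub (by omega : 1 ≤ n - n / k),
          Nat.cast_sub (by omega : n / k ≤ n)]
        norm_num
      have hc2 : (n : ℚ) < (k : ℚ) * ((n / k : ℕ) : ℚ) + k := by exact_mod_cast hmod
      rw [hc1]
      nlinarith
    omega
  have hbound : k * 2 ^ N < F.card := by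
    calc k * 2 ^ N ≤ (r - 1) * 2 ^ ⌈(((r : ℚ) - 2) * n) / ((r : ℚ) - 1)⌉₊ :=
          Nat.mul_le_mul (le_of_eq rfl) (Nat.pow_le_pow_right (by norm_num) hNle)
      _ < F.card := hcon
  -- the restriction maps
  set φ : ℕ → Finset (Fin n) → Finset (Fin n) :=
    fun i A => A.filter (fun x => ¬ (x.val % k = i)) with hφdef
  have hφmem : ∀ (i : ℕ) (A : Finset (Fin n)) (x : Fin n),
      x.val % k ≠ i → (x ∈ φ i A ↔ x ∈ A) := by
    intro i A x hx
    simp [hφdef, hx]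
  set lonely : ℕ → Finset (Finset (Fin n)) :=
    fun i => F.filter (fun A => ∀ B ∈ F, φ i B = φ i A → B = A) with hldef
  -- cardinality of each lonely set
  have hlonely_card : ∀ i < k, (lonely i).card ≤ 2 ^ N := by
    intro i hi
    have hinj : Set.InjOn (φ i) (lonely i) := by
      intro A hA B hB hAB
      simp only [hldef, Finset.coe_filter, Set.mem_setOf_eq] at hA hB
      exact hB.2 A hA.1 hAB
    have h1 : (lonely i).card = ((lonely i).image (φ i)).card :=
      (Finset.card_image_of_injOn hinj).symm
    have h2 : (lonely i).image (φ i) ⊆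
        (Finset.univ.filter (fun x : Fin n => ¬ (x.val % k = i))).powerset := by
      intro S hS
      obtain ⟨A, _, rfl⟩ := Finset.mem_image.mp hS
      rw [Finset.mem_powerset]
      intro x hx
      simp only [hφdef, Finset.mem_filter] at hx ⊢
      exact ⟨Finset.mem_univ x, hx.2⟩
    have hblock : n / k ≤ (Finset.univ.filter (fun x : Fin n => x.val % k = i)).card := by
      have hcle := Finset.card_le_card_of_injOn
        (f := fun j => (⟨(i + j * k) % n, Nat.mod_lt _ (by omega)⟩ : Fin n))
        (s := Finset.range (n / k))
        (t := Finset.univ.filter (fun x : Fin n => x.val % k = i))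
        ?_ ?_
      · simpa using hcle
      · intro j hj
        have hjlt : j < n / k := Finset.mem_range.mp hj
        have hlt : i + j * k < n := by
          have h3 : (j + 1) * k ≤ (n / k) * k := Nat.mul_le_mul_right k (by omega)
          have h4 : (n / k) * k ≤ n := Nat.div_mul_le_self n k
          have : i + j * k < (j + 1) * k := by
            have : i < k := hi
            nlinarith
          omega
        simp only [Finset.mem_filter, Finset.mem_univ, true_and]
        simp only [Finset.coe_filter, Finset.mem_univ, true_and, Set.mem_setOf_eq]
        show ((i + j * k) % n) % k = i
        rw [Nat.mod_eq_of_lt hlt, Nat.add_mul_mod_self_right, Nat.mod_eq_of_lt hi]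
      · intro a ha b hb hab
        have hjlta : a < n / k := Finset.mem_range.mp ha
        have hjltb : b < n / k := Finset.mem_range.mp hb
        have hlta : i + a * k < n := by
          have h3 : (a + 1) * k ≤ (n / k) * k := Nat.mul_le_mul_right k (by omega)
          have h4 : (n / k) * k ≤ n := Nat.div_mul_le_self n k
          nlinarith
        have hltb : i + b * k < n := by
          have h3 : (b + 1) * k ≤ (n / k) * k := Nat.mul_le_mul_right k (by omega)
          have h4 : (n / k) * k ≤ n := Nat.div_mul_le_self n k
          nlinarith
        have := congrArg Fin.val hab
        simp only [Nat.mod_eq_of_lt hlta, Nat.mod_eq_of_lt hltb] at this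
        have : a * k = b * k := by omega
        exact Nat.eq_of_mul_eq_mul_right hk0 this
    have hcfilter :
        (Finset.univ.filter (fun x : Fin n => ¬ (x.val % k = i))).card ≤ N := by
      have hsum := Finset.card_filter_add_card_filter_not
        (s := (Finset.univ : Finset (Fin n))) (p := fun x : Fin n => x.val % k = i)
      have hcu : (Finset.univ : Finset (Fin n)).card = n := by simp
      omega
    calc (lonely i).card = ((lonely i).image (φ i)).card := h1
      _ ≤ ((Finset.univ.filter (fun x : Fin n => ¬ (x.val % k = i))).powerset).card :=
          Finset.card_le_card h2
      _ = 2 ^ (Finset.univ.filter (fun x : Fin n => ¬ (x.val % k = i))).card :=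
          Finset.card_powerset _
      _ ≤ 2 ^ N := Nat.pow_le_pow_right (by norm_num) hcfilter
  -- find a set A₀ not lonely for any i
  set S : Finset (Finset (Fin n)) := (Finset.range k).biUnion lonely with hSdef
  have hScard : S.card ≤ k * 2 ^ N := by
    calc S.card ≤ ∑ i ∈ Finset.range k, (lonely i).card := Finset.card_biUnion_le
      _ ≤ ∑ _i ∈ Finset.range k, 2 ^ N :=
          Finset.sum_le_sum (fun i hi => hlonely_card i (Finset.mem_range.mp hi))
      _ = k * 2 ^ N := by simp [Finset.sum_const, Finset.card_range]
  have hex : ∃ A₀ ∈ F, A₀ ∉ S := by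
    by_contra hno
    push_neg at hno
    have : F ⊆ S := fun A hA => hno A hA
    have := Finset.card_le_card this
    omega
  obtain ⟨A₀, hA₀F, hA₀S⟩ := hex
  have hA : ∀ i : Fin k, ∃ B ∈ F, φ i.val B = φ i.val A₀ ∧ B ≠ A₀ := by
    intro i
    by_contra hcontra
    push_neg at hcontra
    have hmem : A₀ ∈ lonely i.val := by
      simp only [hldef, Finset.mem_filter]
      exact ⟨hA₀F, fun B hB hφB => hcontra B hB hφB⟩
    exact hA₀S (Finset.mem_biUnion.mpr ⟨i.val, Finset.mem_range.mpr i.isLt, hmem⟩)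
  choose A hAF hAφ hAne using hA
  have hkey : ∀ (i : Fin k) (x : Fin n), x.val % k ≠ i.val → (x ∈ A i ↔ x ∈ A₀) := by
    intro i x hx
    have h1 := hφmem i.val (A i) x hx
    have h2 := hφmem i.val A₀ x hx
    rw [← h1, ← h2, hAφ i]
  have hAinj : Function.Injective A := by
    intro i j hij
    by_contra hne
    have hvals : i.val ≠ j.val := fun h => hne (Fin.ext h)
    have hAeq : A i = A₀ := by
      ext x
      by_cases hx : x.val % k = i.val
      · rw [hij]
        exact hkey j x (by rw [hx]; exact hvals)
      · exact hkey i x hx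
    exact hAne i hAeq
  set H : Finset (Finset (Fin n)) := insert A₀ (Finset.image A Finset.univ) with hHdef
  have hA₀img : A₀ ∉ Finset.image A Finset.univ := by
    rw [Finset.mem_image]
    rintro ⟨i, _, hiA⟩
    exact hAne i hiA
  have hHcard : H.card = r := by
    rw [hHdef, Finset.card_insert_of_notMem hA₀img,
      Finset.card_image_of_injective _ hAinj, Finset.card_univ, Fintype.card_fin]
    omega
  have hHsub : H ⊆ F := by
    rw [hHdef]
    apply Finset.insert_subset hA₀F
    intro B hB
    obtain ⟨i, _, rfl⟩ := Finset.mem_image.mp hB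
    exact hAF i
  apply hF H hHsub
  refine ⟨hHcard, fun x => ?_⟩
  set ix : Fin k := ⟨x.val % k, Nat.mod_lt _ hk0⟩ with hixdef
  have hother : ∀ j : Fin k, j ≠ ix → (x ∈ A j ↔ x ∈ A₀) := by
    intro j hj
    apply hkey j x
    intro h
    exact hj (Fin.ext h).symm
  have hAixmem : A ix ∈ H := Finset.mem_insert_of_mem
    (Finset.mem_image_of_mem A (Finset.mem_univ ix))
  by_cases h0 : x ∈ A₀ <;> by_cases hi : x ∈ A ix
  · -- all r sets contain x
    have hfe : H.filter (fun B => x ∈ B) = H := by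
      apply Finset.filter_true_of_mem
      intro B hB
      rcases Finset.mem_insert.mp hB with rfl | hBimg
      · exact h0
      · obtain ⟨j, _, rfl⟩ := Finset.mem_image.mp hBimg
        by_cases hj : j = ix
        · rw [hj]; exact hi
        · exact (hother j hj).mpr h0
    rw [hfe, hHcard]
    exact .inr (.inr (.inr rfl))
  · -- all but A ix contain x : count r - 1
    have hfe : H.filter (fun B => x ∈ B) = H.erase (A ix) := by
      ext B
      simp only [Finset.mem_filter, Finset.mem_erase]
      constructor
      · rintro ⟨hBH, hxB⟩
        refine ⟨?_, hBH⟩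
        rintro rfl
        exact hi hxB
      · rintro ⟨hBne, hBH⟩
        refine ⟨hBH, ?_⟩
        rcases Finset.mem_insert.mp hBH with rfl | hBimg
        · exact h0
        · obtain ⟨j, _, rfl⟩ := Finset.mem_image.mp hBimg
          have hj : j ≠ ix := fun h => hBne (congrArg A h)
          exact (hother j hj).mpr h0
    rw [hfe, Finset.card_erase_of_mem hAixmem, hHcard]
    exact .inr (.inr (.inl rfl))
  · -- only A ix contains x : count 1
    have hfe : H.filter (fun B => x ∈ B) = {A ix} := by
      ext B
      simp only [Finset.mem_filter, Finset.mem_singleton]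
      constructor
      · rintro ⟨hBH, hxB⟩
        rcases Finset.mem_insert.mp hBH with rfl | hBimg
        · exact absurd hxB h0
        · obtain ⟨j, _, rfl⟩ := Finset.mem_image.mp hBimg
          by_cases hj : j = ix
          · rw [hj]
          · exact absurd ((hother j hj).mp hxB) h0
      · rintro rfl
        exact ⟨hAixmem, hi⟩
    rw [hfe, Finset.card_singleton]
    exact .inr (.inl rfl)
  · -- no set contains x : count 0
    have hfe : H.filter (fun B => x ∈ B) = ∅ := by
      apply Finset.filter_eq_empty_iff.mpr
      intro B hB
      rcases Finset.mem_insert.mp hB with rfl | hBimg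
      · exact h0
      · obtain ⟨j, _, rfl⟩ := Finset.mem_image.mp hBimg
        by_cases hj : j = ix
        · rw [hj]; exact hi
        · intro hxB
          exact h0 ((hother j hj).mp hxB)
    rw [hfe, Finset.card_empty]
    exact .inl rfl
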